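/- The map sending the monomial x_1^{α_1}⋯x_n^{α_n} to the integer partition having α_n parts equal to n, α_{n-1} parts equal to n−1, …, and α_1 parts equal to 1 is an order isomorphism from the poset (M, C_{·,·}) onto the Young lattice of weakly decreasing, eventually zero sequences of nonnegative integers ordered by pointwise comparison. In particular (M, C_{·,·}) is a distributive lattice. -/

import Mathlib

/-- The free abelian monoid `M` on variables `x₁, x₂, …`, identified with
finitely supported exponent vectors; index `i : ℕ` represents the variable `x_{i+1}`. -/
abbrev Mon : Type := ℕ →₀ ℕ

/-- Total degree of a monomial. -/
def deg (m : Mon) : ℕ := m.sum fun _ v => v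

/-- `m` is a monomial in the first `n` variables, i.e. `m ∈ Mⁿ`. -/
def InVars (n : ℕ) (m : Mon) : Prop := ∀ i ∈ m.support, i < n

/-- Elementary move: `m = (x_i / x_j) · m'` for some `i < j` with `x_j ∣ m'`. -/
def ElemMove (m m' : Mon) : Prop :=
  ∃ i j : ℕ, i < j ∧ m + Finsupp.single j 1 = m' + Finsupp.single i 1

/-- Stable move: `m = (x_i / x_s) · m'` where `s = maxsupp m'` and `i < s`. -/
def StableMove (m m' : Mon) : Prop :=
  ∃ s i : ℕ, i < s ∧ m' s ≠ 0 ∧ (∀ t, s < t → m' t = 0) ∧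
    m + Finsupp.single s 1 = m' + Finsupp.single i 1

/-- The divisibility relation `D`: `(m, m') ∈ D` iff `m'` divides `m`. -/
def Dvd' (m m' : Mon) : Prop := ∃ t : Mon, m = m' + t

/-- The strongly stable partial order `A_{n,d}` on monomials of degree `d`
in the first `n` variables: reflexive–transitive closure of elementary moves
within `M_d^n`. -/
def Asub (n d : ℕ) (m m' : Mon) : Prop :=
  Relation.ReflTransGen
    (fun a b => InVars n a ∧ InVars n b ∧ deg a = d ∧ deg b = d ∧ ElemMove a b) m m'

/-- `A_{·,·} = rtr(D ∪ ⋃_{n,d} A_{n,d})`. -/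
def Aall : Mon → Mon → Prop :=
  Relation.ReflTransGen (fun a b => Dvd' a b ∨ ∃ n d, Asub n d a b)

/-- `C_{n,d}` is the dual of `A_{n,d}`, and `C_{·,·} = rtr(D ∪ ⋃_{n,d} C_{n,d})`. -/
def Call : Mon → Mon → Prop :=
  Relation.ReflTransGen (fun a b => Dvd' a b ∨ ∃ n d, Asub n d b a)

/-- The Young lattice: weakly decreasing, eventually zero sequences of
nonnegative integers (`l k` is the `(k+1)`-st part). -/
def Young : Type := {l : ℕ → ℕ // (∀ i, l (i + 1) ≤ l i) ∧ ∃ N, ∀ i, N ≤ i → l i = 0}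

section Aux
def tl (m : Mon) (r : ℕ) : ℕ := ∑ p ∈ m.support.filter (fun p => r ≤ p), m p


lemma le_sup_of_mem {s : Finset ℕ} {p : ℕ} (hp : p ∈ s) : p ≤ s.sup id := Finset.le_sup (f := id) hp

lemma tl_eq_sum_Ico (m : Mon) (r N : ℕ) (hN : ∀ p ∈ m.support, p < N) :
    tl m r = ∑ p ∈ Finset.Ico r N, m p := by
  apply Finset.sum_subset
  · intro p hp
    rw [Finset.mem_filter] at hp
    exact Finset.mem_Ico.2 ⟨hp.2, hN p hp.1⟩
  · intro p hp hps
    by_contra h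
    exact hps (Finset.mem_filter.2 ⟨Finsupp.mem_support_iff.2 h, (Finset.mem_Ico.1 hp).1⟩)

lemma tl_rec (m : Mon) (r : ℕ) : tl m r = m r + tl m (r + 1) := by
  have hN : ∀ p ∈ m.support, p < (m.support.sup id) + 1 + r + 1 := by
    intro p hp
    have := le_sup_of_mem hp
    omega
  rw [tl_eq_sum_Ico m r _ hN, tl_eq_sum_Ico m (r+1) _ hN,
    Finset.sum_eq_sum_Ico_succ_bot (by omega)]

lemma tl_add (a b : Mon) (r : ℕ) : tl (a + b) r = tl a r + tl b r := by
  classical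
  set N := (a.support ∪ b.support).sup id + 1 with hNdef
  have hbig : ∀ p, p ∈ a.support ∪ b.support → p < N := by
    intro p hp; have := le_sup_of_mem hp; omega
  rw [tl_eq_sum_Ico a r N (fun p hp => hbig p (Finset.mem_union_left _ hp)),
      tl_eq_sum_Ico b r N (fun p hp => hbig p (Finset.mem_union_right _ hp)),
      tl_eq_sum_Ico (a+b) r N (fun p hp => hbig p (Finsupp.support_add hp)),
      ← Finset.sum_add_distrib]
  rfl

lemma tl_single (j r : ℕ) : tl (Finsupp.single j 1) r = if r ≤ j then 1 else 0 := by
  rw [tl_eq_sum_Ico _ r (j+1) (by intro p hp; have := Finsupp.support_single_subset hp; simp only [Finset.mem_singleton] at this; omega)]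
  rcases le_or_gt r j with h | h
  · rw [if_pos h, Finset.sum_eq_single j]
    · simp
    · intro p hp hne; simp [Finsupp.single_apply, Ne.symm hne]
    · intro hj; exact absurd (Finset.mem_Ico.2 ⟨h, by omega⟩) hj
  · rw [if_neg (by omega), Finset.Ico_eq_empty (by omega), Finset.sum_empty]

lemma tl_antitone (m : Mon) : ∀ r, tl m (r+1) ≤ tl m r := fun r => by
  rw [tl_rec m r]; omega

lemma tl_zero_of_big (m : Mon) (r : ℕ) (h : m.support.sup id < r) : tl m r = 0 := by
  rw [tl_eq_sum_Ico m r r (fun p hp => by have := le_sup_of_mem hp; omega)]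
  simp

lemma tl_injective : Function.Injective tl := by
  intro a b h
  ext p
  have h1 := tl_rec a p
  have h2 := tl_rec b p
  rw [h] at h1
  rw [h1] at h2
  omega

lemma tl_mono (m : Mon) {r s : ℕ} (h : r ≤ s) : tl m s ≤ tl m r :=
  antitone_nat_of_succ_le (tl_antitone m) h

/-- the k-th part of the partition of m -/
noncomputable def pt (m : Mon) (k : ℕ) : ℕ := sInf {r | tl m r ≤ k}

lemma pt_nonempty (m : Mon) (k : ℕ) : {r | tl m r ≤ k}.Nonempty :=
  ⟨m.support.sup id + 1, by
    simp only [Set.mem_setOf_eq]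
    rw [tl_zero_of_big m _ (Nat.lt_succ_self _)]
    omega⟩

lemma tl_pt_le (m : Mon) (k : ℕ) : tl m (pt m k) ≤ k := by
  have := Nat.sInf_mem (pt_nonempty m k)
  exact this

/-- Galois: pt m k ≤ r ↔ tl m r ≤ k -/
lemma pt_le_iff (m : Mon) (k r : ℕ) : pt m k ≤ r ↔ tl m r ≤ k := by
  constructor
  · intro h
    exact le_trans (tl_mono m h) (tl_pt_le m k)
  · intro h
    exact Nat.sInf_le h

lemma pt_antitone (m : Mon) (k : ℕ) : pt m (k+1) ≤ pt m k := by
  rw [pt_le_iff]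
  exact le_trans (tl_pt_le m k) (by omega)

lemma pt_eventually_zero (m : Mon) (k : ℕ) (h : tl m 0 ≤ k) : pt m k = 0 := by
  have := (pt_le_iff m k 0).2 h
  omega

noncomputable def ptY (m : Mon) : Young := ⟨pt m, fun k => pt_antitone m k, ⟨tl m 0, fun k h => pt_eventually_zero m k h⟩⟩

-- multiplicity condition
lemma card_parts (m : Mon) (p : ℕ) : Nat.card {k : ℕ // pt m k = p + 1} = m p := by
  have hset : {k : ℕ | pt m k = p + 1} = Set.Ico (tl m (p+1)) (tl m p) := by
    ext k
    simp only [Set.mem_setOf_eq, Set.mem_Ico]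
    constructor
    · intro h
      constructor
      · rw [← pt_le_iff]; omega
      · by_contra hc
        have := (pt_le_iff m k p).2 (by omega)
        omega
    · rintro ⟨h1, h2⟩
      have ha : pt m k ≤ p + 1 := (pt_le_iff m k (p+1)).2 h1
      have hb : ¬ pt m k ≤ p := fun hc => by
        have := (pt_le_iff m k p).1 hc; omega
      omega
  have : {k : ℕ // pt m k = p + 1} = ↥(Set.Ico (tl m (p+1)) (tl m p)) := by
    rw [← hset]; rfl
  rw [this, Nat.card_coe_set_eq, ← Finset.coe_Ico, Set.ncard_coe_finset, Nat.card_Ico]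
  have := tl_rec m p
  omega

-- tails recoverable from pt: pt-pointwise-domination iff tl-pointwise-domination
lemma pt_le_pt_iff_tl (a b : Mon) :
    (∀ k, pt b k ≤ pt a k) ↔ (∀ r, tl b r ≤ tl a r) := by
  constructor
  · intro h r
    have h1 : pt a (tl a r) ≤ r := (pt_le_iff a _ r).2 le_rfl
    exact (pt_le_iff b _ r).1 (le_trans (h _) h1)
  · intro h k
    rw [pt_le_iff]
    exact le_trans (h _) ((pt_le_iff a k _).1 le_rfl)

lemma ptY_injective : Function.Injective ptY := by
  intro a b h
  have hpt : pt a = pt b := congrArg Subtype.val h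
  apply tl_injective
  funext r
  have hab := (pt_le_pt_iff_tl b a).1 (fun k => (congrFun hpt k).le)
  have hba := (pt_le_pt_iff_tl a b).1 (fun k => (congrFun hpt k).ge)
  exact le_antisymm (hab r) (hba r)

lemma ptY_val (m : Mon) : (ptY m).1 = pt m := rfl

-- monomial with prescribed tail function
noncomputable def mkT (T : ℕ → ℕ) (N : ℕ) (h2 : ∀ r, N ≤ r → T r = 0) : Mon :=
  Finsupp.onFinset (Finset.range N) (fun p => T p - T (p + 1))
    (fun p hp => by
      rw [Finset.mem_range]
      by_contra h
      exact hp (by simp only [h2 p (by omega), h2 (p+1) (by omega)]; rfl))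

lemma mkT_apply (T : ℕ → ℕ) (N : ℕ) (h2 : ∀ r, N ≤ r → T r = 0) (p : ℕ) :
    mkT T N h2 p = T p - T (p + 1) := rfl

lemma tl_mkT (T : ℕ → ℕ) (N : ℕ) (h1 : ∀ r, T (r + 1) ≤ T r) (h2 : ∀ r, N ≤ r → T r = 0) :
    ∀ r, tl (mkT T N h2) r = T r := by
  set m := mkT T N h2 with hm
  have hsupp : ∀ p ∈ m.support, p < N := by
    intro p hp
    have := Finsupp.support_onFinset_subset hp
    simpa using this
  have key : ∀ d r, N ≤ r + d → tl m r = T r := by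
    intro d
    induction d with
    | zero =>
      intro r hr
      rw [tl_eq_sum_Ico m r r (fun p hp => lt_of_lt_of_le (hsupp p hp) (by omega)),
        Finset.Ico_self, Finset.sum_empty, h2 r (by omega)]
    | succ n ih =>
      intro r hr
      rcases le_or_gt N r with h | h
      · rw [tl_eq_sum_Ico m r r (fun p hp => lt_of_lt_of_le (hsupp p hp) h),
          Finset.Ico_self, Finset.sum_empty, h2 r h]
      · rw [tl_rec m r, ih (r+1) (by omega), mkT_apply, Nat.sub_add_cancel (h1 r)]
  intro r
  exact key N r (by omega)

-- surjectivity of ptY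
noncomputable def conj (l : ℕ → ℕ) (r : ℕ) : ℕ := sInf {k | l k ≤ r}

lemma conj_le_iff (l : ℕ → ℕ) (h1 : ∀ i, l (i + 1) ≤ l i) {N : ℕ} (hN : ∀ i, N ≤ i → l i = 0)
    (r k : ℕ) : conj l r ≤ k ↔ l k ≤ r := by
  have hne : {k | l k ≤ r}.Nonempty := ⟨N, by simp [hN N le_rfl]⟩
  constructor
  · intro h
    have hmem : l (conj l r) ≤ r := Nat.sInf_mem hne
    exact le_trans (antitone_nat_of_succ_le h1 h) hmem
  · intro h
    exact Nat.sInf_le h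

lemma ptY_surjective : Function.Surjective ptY := by
  rintro ⟨l, h1, N, hN⟩
  have hconj_succ : ∀ r, conj l (r + 1) ≤ conj l r := by
    intro r
    rw [conj_le_iff l h1 hN]
    exact le_trans ((conj_le_iff l h1 hN r (conj l r)).1 le_rfl) (by omega)
  have hconj_zero : ∀ r, l 0 ≤ r → conj l r = 0 := by
    intro r hr
    have := (conj_le_iff l h1 hN r 0).2 hr
    omega
  refine ⟨mkT (conj l) (l 0) hconj_zero, ?_⟩
  apply Subtype.ext
  rw [ptY_val]
  funext k
  show sInf {r | tl (mkT (conj l) (l 0) hconj_zero) r ≤ k} = l k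
  have htl := tl_mkT (conj l) (l 0) hconj_succ hconj_zero
  have hset : {r | tl (mkT (conj l) (l 0) hconj_zero) r ≤ k} = Set.Ici (l k) := by
    ext r
    simp only [Set.mem_setOf_eq, Set.mem_Ici, htl r]
    rw [conj_le_iff l h1 hN]
  rw [hset]
  exact csInf_Ici

lemma tl_of_elem {u v : Mon} (h : ElemMove u v) (r : ℕ) : tl u r ≤ tl v r := by
  obtain ⟨i, j, hij, heq⟩ := h
  have := congrArg (fun m => tl m r) heq
  simp only [tl_add, tl_single] at this
  split_ifs at this <;> omega

lemma tl_of_asub {n d : ℕ} {u v : Mon} (h : Asub n d u v) (r : ℕ) : tl u r ≤ tl v r := by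
  induction h with
  | refl => exact le_rfl
  | tail _ hstep ih => exact le_trans ih (tl_of_elem hstep.2.2.2.2 r)

lemma tl_of_call {a b : Mon} (h : Call a b) (r : ℕ) : tl b r ≤ tl a r := by
  induction h with
  | refl => exact le_rfl
  | tail _ hstep ih =>
    refine le_trans ?_ ih
    rcases hstep with ⟨t, ht⟩ | ⟨n, d, ha⟩
    · rw [ht, tl_add]; omega
    · exact tl_of_asub ha r

-- weight for induction
def w (m : Mon) : ℕ := m.sum fun p v => (p + 1) * v

lemma w_add (a b : Mon) : w (a + b) = w a + w b :=
  Finsupp.sum_add_index (fun p _ => by ring) (fun p _ v1 v2 => by ring)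

lemma w_single (j : ℕ) : w (Finsupp.single j 1) = j + 1 := by
  rw [w, Finsupp.sum_single_index] <;> ring

lemma deg_eq_tl (m : Mon) : deg m = tl m 0 := by
  rw [deg, tl, Finsupp.sum, Finset.filter_true_of_mem (fun p _ => Nat.zero_le p)]


lemma call_of_tl : ∀ n (a b : Mon), w a ≤ n → (∀ r, tl b r ≤ tl a r) → Call a b := by
  intro n
  induction n with
  | zero =>
    intro a b hw htl
    have ha : a = 0 := by
      ext p
      by_contra hp
      have hmem : p ∈ a.support := Finsupp.mem_support_iff.2 hp
      have h1 : (p + 1) * a p ≤ w a :=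
        Finset.single_le_sum (f := fun q => (q + 1) * a q) (fun q _ => Nat.zero_le _) hmem
      have h2 : (p + 1) * a p ≠ 0 := Nat.mul_ne_zero (by omega) hp
      omega
    subst ha
    have hb : b = 0 := by
      apply tl_injective
      funext r
      have h0 : tl (0 : Mon) r = 0 := by simp [tl]
      have := htl r
      omega
    subst hb
    exact Relation.ReflTransGen.refl
  | succ n ih =>
    intro a b hw htl
    by_cases hab : a = b
    · subst hab; exact Relation.ReflTransGen.refl
    set N := a.support.sup id + 1 with hN
    have htlaN : ∀ s, N ≤ s → tl a s = 0 := by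
      intro s hs; exact tl_zero_of_big a s (by omega)
    set F := (Finset.range N).filter (fun r => tl b r < tl a r) with hF
    have hFne : F.Nonempty := by
      by_contra hFe
      rw [Finset.not_nonempty_iff_eq_empty, Finset.filter_eq_empty_iff] at hFe
      apply hab
      apply tl_injective
      funext s
      rcases lt_or_ge s N with h | h
      · have := hFe (Finset.mem_range.2 h)
        have := htl s
        omega
      · have := htlaN s h
        have := htl s
        omega
    set r := F.max' hFne with hr
    have hrF : r ∈ F := F.max'_mem hFne
    rw [hF, Finset.mem_filter, Finset.mem_range] at hrF
    obtain ⟨hrN, hrlt⟩ := hrF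
    have hmax : ∀ s, r < s → tl b s = tl a s := by
      intro s hs
      rcases lt_or_ge s N with h | h
      · by_contra hne
        have hsF : s ∈ F := by
          rw [hF, Finset.mem_filter, Finset.mem_range]
          have := htl s
          exact ⟨h, by omega⟩
        have := Finset.le_max' F s hsF
        omega
      · have := htlaN s h
        have := htl s
        omega
    have har : a r ≠ 0 := by
      have h1 := tl_rec a r
      have h2 := tl_rec b r
      have h3 := hmax (r + 1) (by omega)
      omega
    rcases Nat.eq_zero_or_pos r with hr0 | hrpos
    · -- divide by x_1
      rw [hr0] at har hrlt
      have hle : Finsupp.single 0 1 ≤ a := by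
        rw [Finsupp.le_def]
        intro p
        rw [Finsupp.single_apply]
        split_ifs with hp
        · subst hp; omega
        · omega
      have key : a - Finsupp.single 0 1 + Finsupp.single 0 1 = a := tsub_add_cancel_of_le hle
      set a' := a - Finsupp.single 0 1 with ha'
      have hstep : Dvd' a a' := ⟨Finsupp.single 0 1, key.symm⟩
      have htls : ∀ s, tl a' s + (if s ≤ 0 then 1 else 0) = tl a s := by
        intro s
        have := congrArg (fun m => tl m s) key
        simpa [tl_add, tl_single] using this
      have htl' : ∀ s, tl b s ≤ tl a' s := by
        intro s
        have h := htls s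
        have hb := htl s
        by_cases hs : s = 0
        · subst hs
          rw [if_pos le_rfl] at h
          omega
        · rw [if_neg (by omega)] at h
          have := hmax s (by omega)
          omega
      have hwa : w a' + 1 = w a := by
        have := congrArg w key
        rw [w_add, w_single] at this
        omega
      exact Relation.ReflTransGen.head (Or.inl hstep) (ih a' b (by omega) htl')
    · -- elementary move x_r → x_{r-1} in reverse
      have hle : Finsupp.single r 1 ≤ a := by
        rw [Finsupp.le_def]
        intro p
        rw [Finsupp.single_apply]
        split_ifs with hp
        · subst hp; omega
        · omega
      set a' := a - Finsupp.single r 1 + Finsupp.single (r - 1) 1 with ha'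
      have heq : a' + Finsupp.single r 1 = a + Finsupp.single (r - 1) 1 := by
        rw [ha', add_right_comm, tsub_add_cancel_of_le hle]
      have hElem : ElemMove a' a := ⟨r - 1, r, by omega, heq⟩
      have hIa : InVars (N + 1) a := by
        intro p hp
        have := le_sup_of_mem hp
        omega
      have hIa' : InVars (N + 1) a' := by
        intro p hp
        by_contra hpN
        have hap : a p = 0 := by
          by_contra h
          have := le_sup_of_mem (Finsupp.mem_support_iff.2 h)
          omega
        refine Finsupp.mem_support_iff.1 hp ?_
        rw [ha', Finsupp.add_apply, Finsupp.tsub_apply, hap,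
          Finsupp.single_apply, Finsupp.single_apply, if_neg (by omega), if_neg (by omega)]
        omega
      have htls : ∀ s, tl a' s + (if s ≤ r then 1 else 0) = tl a s + (if s ≤ r - 1 then 1 else 0) := by
        intro s
        have := congrArg (fun m => tl m s) heq
        simpa [tl_add, tl_single] using this
      have hdeg : deg a' = deg a := by
        have := htls 0
        rw [if_pos (Nat.zero_le r), if_pos (Nat.zero_le _)] at this
        rw [deg_eq_tl, deg_eq_tl]
        omega
      have hAsub : Asub (N + 1) (deg a) a' a :=
        Relation.ReflTransGen.single ⟨hIa', hIa, hdeg, rfl, hElem⟩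
      have htl' : ∀ s, tl b s ≤ tl a' s := by
        intro s
        have h := htls s
        have hbs := htl s
        by_cases hsr : s = r
        · subst hsr
          rw [if_pos le_rfl, if_neg (by omega)] at h
          omega
        · rcases le_or_gt s r with h1 | h1
          · rw [if_pos h1, if_pos (by omega)] at h
            omega
          · rw [if_neg (by omega), if_neg (by omega)] at h
            have := hmax s (by omega)
            omega
      have hwa : w a' + 1 = w a := by
        have hthis := congrArg w heq
        have h1 : w (a' + Finsupp.single r 1) = w a' + (r + 1) := by rw [w_add, w_single]
        have h2 : w (a + Finsupp.single (r - 1) 1) = w a + (r - 1 + 1) := by rw [w_add, w_single]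
        rw [h1, h2] at hthis
        omega
      exact Relation.ReflTransGen.head (Or.inr ⟨N + 1, deg a, hAsub⟩) (ih a' b (by omega) htl')


lemma tl_big' (m : Mon) (r : ℕ) (h : m.support.sup id + 1 ≤ r) : tl m r = 0 :=
  tl_zero_of_big m r (by omega)

noncomputable def monSup (a b : Mon) : Mon :=
  mkT (fun r => max (tl a r) (tl b r)) (max (a.support.sup id + 1) (b.support.sup id + 1))
    (fun r hr => by
      show max (tl a r) (tl b r) = 0
      rw [tl_big' a r (le_trans (le_max_left _ _) hr), tl_big' b r (le_trans (le_max_right _ _) hr)]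
      simp)

noncomputable def monInf (a b : Mon) : Mon :=
  mkT (fun r => min (tl a r) (tl b r)) (max (a.support.sup id + 1) (b.support.sup id + 1))
    (fun r hr => by
      show min (tl a r) (tl b r) = 0
      rw [tl_big' a r (le_trans (le_max_left _ _) hr), tl_big' b r (le_trans (le_max_right _ _) hr)]
      simp)

lemma tl_monSup (a b : Mon) (r : ℕ) : tl (monSup a b) r = max (tl a r) (tl b r) :=
  tl_mkT _ _ (fun s => by exact max_le_max (tl_antitone a s) (tl_antitone b s)) _ r

lemma tl_monInf (a b : Mon) (r : ℕ) : tl (monInf a b) r = min (tl a r) (tl b r) :=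
  tl_mkT _ _ (fun s => by exact min_le_min (tl_antitone a s) (tl_antitone b s)) _ r

noncomputable instance : Max Mon := ⟨monSup⟩
noncomputable instance : Min Mon := ⟨monInf⟩

noncomputable def monDL : DistribLattice Mon :=
  letI : Max Mon := ⟨monSup⟩
  letI : Min Mon := ⟨monInf⟩
  letI : LE Mon := ⟨fun a b => tl a ≤ tl b⟩
  letI : LT Mon := ⟨fun a b => tl a < tl b⟩
  Function.Injective.distribLattice tl tl_injective Iff.rfl Iff.rfl
    (fun a b => funext fun r => by
      show tl (monSup a b) r = (tl a ⊔ tl b) r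
      rw [tl_monSup]; rfl)
    (fun a b => funext fun r => by
      show tl (monInf a b) r = (tl a ⊓ tl b) r
      rw [tl_monInf]; rfl)


end Aux

/-- The map sending `x₁^{α₁} ⋯ x_n^{α_n}` to the partition with
`α_n` parts equal to `n`, …, `α₁` parts equal to `1` (i.e. the partition whose
multiplicity of the part `p+1` is the exponent `m p` of `x_{p+1}`) is an order
isomorphism from `(M, C_{·,·})` onto the Young lattice ordered by pointwise
comparison.  In particular `(M, C_{·,·})` is a distributive lattice. -/

theorem stmt4 :
    (∃ f : Mon → Young,
      Function.Bijective f ∧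
      (∀ m : Mon, ∀ p : ℕ, Nat.card {k : ℕ // (f m).1 k = p + 1} = m p) ∧
      (∀ a b : Mon, Call a b ↔ ∀ k, (f b).1 k ≤ (f a).1 k)) ∧
    (∃ inst : DistribLattice Mon, ∀ a b : Mon, inst.le a b ↔ Call b a) := by
  constructor
  · refine ⟨ptY, ⟨ptY_injective, ptY_surjective⟩, ?_, ?_⟩
    · intro m p
      exact card_parts m p
    · intro a b
      constructor
      · intro h k
        exact (pt_le_pt_iff_tl a b).2 (fun r => tl_of_call h r) k
      · intro h
        exact call_of_tl (w a) a b le_rfl ((pt_le_pt_iff_tl a b).1 h)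
  · refine ⟨monDL, fun a b => ?_⟩
    show (∀ r, tl a r ≤ tl b r) ↔ Call b a
    constructor
    · intro h
      exact call_of_tl (w b) b a le_rfl h
    · intro h r
      exact tl_of_call h r
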